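/- arXiv:1702.05303 — 2 statements merged into one kernel-verified Lean document; each statement's English description precedes it below -/
import Mathlib

section
/- In any tree T, the set of vertices minimizing ww_T induces a connected subgraph. -/
open Finset
open scoped Classical

/-- Local hyper-Wiener function: `ww G v = Σ_u (d(u,v)² + d(u,v))`. -/
noncomputable def ww {V : Type*} [Fintype V] (G : SimpleGraph V) (v : V) : ℕ :=
  ∑ u : V, ((G.dist u v) ^ 2 + G.dist u v)

namespace Stmt15Aux

open SimpleGraph

variable {V : Type*} {G : SimpleGraph V}

lemma concat_isPath {u a b : V} {p : G.Walk u a} (hp : p.IsPath)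
    (h : G.Adj a b) (hb : b ∉ p.support) : (p.concat h).IsPath := by
  rw [← Walk.isPath_reverse_iff, Walk.reverse_concat]
  exact hp.reverse.cons (by simpa [Walk.support_reverse] using hb)

lemma not_mem_of_dist_lt {u a b : V} (p : G.Walk u a) (hlen : p.length = G.dist u a)
    (hb : G.dist u a < G.dist u b) : b ∉ p.support := by
  classical
  intro hmem
  have h1 : G.dist u b ≤ (p.takeUntil b hmem).length := SimpleGraph.dist_le _
  have h2 := Walk.length_takeUntil_le p hmem
  omega

lemma dist_adj_cases (hT : G.IsTree) (u : V) {a b : V} (hab : G.Adj a b) :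
    G.dist u b = G.dist u a + 1 ∨ G.dist u a = G.dist u b + 1 := by
  classical
  have hc := hT.isConnected
  obtain ⟨pa, hpa, hla⟩ := hc.exists_path_of_dist u a
  obtain ⟨pb, hpb, hlb⟩ := hc.exists_path_of_dist u b
  have h1 : G.dist u b ≤ G.dist u a + 1 := by
    have := SimpleGraph.dist_le (pa.concat hab)
    rwa [Walk.length_concat, hla] at this
  have h2 : G.dist u a ≤ G.dist u b + 1 := by
    have := SimpleGraph.dist_le (pb.concat hab.symm)
    rwa [Walk.length_concat, hlb] at this
  have hne : G.dist u a ≠ G.dist u b := by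
    intro he
    by_cases hmem : b ∈ pa.support
    · have hta := congrArg Walk.length (pa.take_spec hmem)
      rw [Walk.length_append] at hta
      have h3 : G.dist u b ≤ (pa.takeUntil b hmem).length := SimpleGraph.dist_le _
      have h4 : (pa.dropUntil b hmem).length ≠ 0 := by
        intro h0
        exact hab.ne' (Walk.eq_of_length_eq_zero h0)
      omega
    · have hq : (pa.concat hab).IsPath := concat_isPath hpa hab hmem
      have heq := (hT.existsUnique_path u b).unique hq hpb
      have hlen := congrArg Walk.length heq
      rw [Walk.length_concat, hla, hlb] at hlen
      omega
  omega

lemma unique_closer (hT : G.IsTree) (u : V) {a b c : V} (ha : G.Adj a b) (hc : G.Adj c b)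
    (h1 : G.dist u a + 1 = G.dist u b) (h2 : G.dist u c + 1 = G.dist u b) : a = c := by
  classical
  obtain ⟨pa, hpa, hla⟩ := hT.isConnected.exists_path_of_dist u a
  obtain ⟨pc, hpc, hlc⟩ := hT.isConnected.exists_path_of_dist u c
  have hba : b ∉ pa.support := not_mem_of_dist_lt pa hla (by omega)
  have hbc : b ∉ pc.support := not_mem_of_dist_lt pc hlc (by omega)
  have hqa : (pa.concat ha).IsPath := concat_isPath hpa ha hba
  have hqc : (pc.concat hc).IsPath := concat_isPath hpc hc hbc
  have he : pa.concat ha = pc.concat hc := (hT.existsUnique_path u b).unique hqa hqc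
  have hs : (pa.concat ha).reverse.support = (pc.concat hc).reverse.support := by rw [he]
  rw [Walk.reverse_concat, Walk.reverse_concat, Walk.support_cons, Walk.support_cons] at hs
  injection hs with _ hs2
  rw [Walk.support_eq_cons pa.reverse, Walk.support_eq_cons pc.reverse] at hs2
  injection hs2

section

variable [Fintype V]

lemma conv_pointwise (hT : G.IsTree) (u : V) {a b c : V} (hab : G.Adj a b) (hcb : G.Adj c b)
    (hne : a ≠ c) :
    2 * ((G.dist u b) ^ 2 + G.dist u b) ≤
      ((G.dist u a) ^ 2 + G.dist u a) + ((G.dist u c) ^ 2 + G.dist u c) := by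
  rcases dist_adj_cases hT u hab with h1 | h1 <;>
    rcases dist_adj_cases hT u hcb with h2 | h2
  · exact absurd (unique_closer hT u hab hcb h1.symm h2.symm) hne
  · nlinarith
  · nlinarith
  · nlinarith

lemma conv_sum (hT : G.IsTree) {a b c : V} (hab : G.Adj a b) (hcb : G.Adj c b)
    (hne : a ≠ c) : 2 * ww G b ≤ ww G a + ww G c := by
  simp only [ww]
  rw [← Finset.sum_add_distrib, Finset.mul_sum]
  exact Finset.sum_le_sum fun u _ => conv_pointwise hT u hab hcb hne

lemma mono_along (hT : G.IsTree) :
    ∀ {w x : V} (p : G.Walk w x), p.IsPath → ∀ a : V, G.Adj a w → a ∉ p.support →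
      ww G a ≤ ww G w → ww G w ≤ ww G x := by
  intro w x p
  induction p with
  | nil => intros; exact le_rfl
  | @cons w b x h' q ih =>
    intro hp a haw hns hle
    rw [Walk.support_cons] at hns
    have hanb : a ≠ b := by
      intro h
      exact hns (List.mem_cons_of_mem _ (h ▸ q.start_mem_support))
    have hconv : 2 * ww G w ≤ ww G a + ww G b := conv_sum hT haw h'.symm hanb
    have hwb : ww G w ≤ ww G b := by omega
    have hwq : w ∉ q.support := ((Walk.cons_isPath_iff _ _).1 hp).2
    have hq : q.IsPath := ((Walk.cons_isPath_iff _ _).1 hp).1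
    exact hwb.trans (ih hq w h' hwq hwb)

lemma support_min (hT : G.IsTree) :
    ∀ {v x : V} (p : G.Walk v x), p.IsPath →
      (∀ u, ww G v ≤ ww G u) → (∀ u, ww G x ≤ ww G u) →
      ∀ y ∈ p.support, ∀ u, ww G y ≤ ww G u := by
  intro v x p
  induction p with
  | nil =>
    intro _ hv _ y hy u
    simp only [Walk.support_nil, List.mem_singleton] at hy
    subst hy
    exact hv u
  | @cons v b x h' q ih =>
    intro hp hv hx y hy u
    have hq : q.IsPath := ((Walk.cons_isPath_iff _ _).1 hp).1
    have hvq : v ∉ q.support := ((Walk.cons_isPath_iff _ _).1 hp).2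
    have hb : ∀ u, ww G b ≤ ww G u := by
      have h1 : ww G b ≤ ww G x := mono_along hT q hq v h' hvq (hv b)
      exact fun u => h1.trans (hx u)
    rw [Walk.support_cons] at hy
    rcases List.mem_cons.1 hy with rfl | hy'
    · exact hv u
    · exact ih hq hb hx y hy' u

end

lemma reach_induce {S : Set V} :
    ∀ {a b : V} (p : G.Walk a b), (∀ y ∈ p.support, y ∈ S) →
      ∀ (ha : a ∈ S) (hb : b ∈ S), (G.induce S).Reachable ⟨a, ha⟩ ⟨b, hb⟩ := by
  intro a b p
  induction p with
  | nil => intro _ ha hb; rfl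
  | @cons a b' x h' q ih =>
    intro hs ha hb
    have hb' : b' ∈ S := hs b' (by simp)
    have hadj : (G.induce S).Adj ⟨a, ha⟩ ⟨b', hb'⟩ := h'
    exact hadj.reachable.trans (ih (fun y hy => hs y (by simp [hy])) hb' hb)

end Stmt15Aux

theorem stmt15 {V : Type*} [Fintype V] (T : SimpleGraph V) (hT : T.IsTree) :
    (T.induce {v | ∀ u, ww T v ≤ ww T u}).Connected := by
  classical
  have hc := hT.isConnected
  have hne : Nonempty V := hc.nonempty
  obtain ⟨v0, -, hv0⟩ := Finset.exists_min_image Finset.univ (ww T)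
    ⟨Classical.arbitrary V, Finset.mem_univ _⟩
  have hv0' : v0 ∈ {v | ∀ u, ww T v ≤ ww T u} := fun u => hv0 u (Finset.mem_univ u)
  rw [SimpleGraph.connected_iff]
  refine ⟨?_, ⟨⟨v0, hv0'⟩⟩⟩
  rintro ⟨a, ha⟩ ⟨b, hb⟩
  obtain ⟨p, hp, -⟩ := hc.exists_path_of_dist a b
  exact Stmt15Aux.reach_induce p (Stmt15Aux.support_min hT p hp ha hb) ha hb
end

section
/- Let T be a tree and P a path in T between two leaves. Then the function i ↦ ww_T(p_i) along the vertices p_0, p_1, …, p_r of P is strictly convex, i.e., ww_T(p_{i+1}) − ww_T(p_i) is strictly increasing in i. -/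
open Finset
open scoped Classical

section Aux

variable {V : Type*} {G : SimpleGraph V}

open SimpleGraph SimpleGraph.Walk

lemma aux_getVert_inj {u v : V} {p : G.Walk u v} (hp : p.IsPath) :
    ∀ i j, i ≤ p.length → j ≤ p.length → p.getVert i = p.getVert j → i = j := by
  induction p with
  | nil => intro i j hi hj _; simp at hi hj; omega
  | @cons u x v h q ih =>
    rcases (Walk.cons_isPath_iff _ _).mp hp with ⟨hq, hu⟩
    intro i j hi hj hij
    match i, j with
    | 0, 0 => rfl
    | 0, j+1 =>
      exfalso
      apply hu
      rw [Walk.mem_support_iff_exists_getVert]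
      refine ⟨j, ?_, ?_⟩
      · simpa [Walk.getVert_cons_succ] using hij.symm
      · simp [Walk.length_cons] at hj; omega
    | i+1, 0 =>
      exfalso
      apply hu
      rw [Walk.mem_support_iff_exists_getVert]
      refine ⟨i, ?_, ?_⟩
      · simpa [Walk.getVert_cons_succ] using hij
      · simp [Walk.length_cons] at hi; omega
    | i+1, j+1 =>
      have := ih hq i j (by simp [Walk.length_cons] at hi; omega)
        (by simp [Walk.length_cons] at hj; omega)
        (by simpa [Walk.getVert_cons_succ] using hij)
      omega

/-- In a tree, distances to the two endpoints of an edge differ by exactly one. -/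
lemma aux_dist_adj (hT : G.IsTree) (u y z : V) (hyz : G.Adj y z) :
    G.dist u z = G.dist u y + 1 ∨ G.dist u y = G.dist u z + 1 := by
  have hconn := hT.isConnected
  have h1 : G.dist y z = 1 := SimpleGraph.dist_eq_one_iff_adj.mpr hyz
  have h2 : G.dist u z ≤ G.dist u y + 1 := by
    have := hconn.dist_triangle (u := u) (v := y) (w := z)
    omega
  have h3 : G.dist u y ≤ G.dist u z + 1 := by
    have := hconn.dist_triangle (u := u) (v := z) (w := y)
    have hzy : G.dist z y = 1 := by rwa [SimpleGraph.dist_comm]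
    omega
  have hne : G.dist u y ≠ G.dist u z := by
    intro heq
    set k := G.dist u y with hk
    -- shortest path from z to u
    obtain ⟨P, hP, hPlen⟩ := hconn.exists_path_of_dist z u
    have hPlen' : P.length = k := by
      rw [hPlen, SimpleGraph.dist_comm, ← heq]
    by_cases hy : y ∈ P.support
    · -- the path from z to y inside P must be the single edge
      have htake : (P.takeUntil y hy).IsPath := hP.takeUntil hy
      have hedge : (Walk.cons hyz.symm Walk.nil : G.Walk z y).IsPath := by
        rw [Walk.cons_isPath_iff]
        exact ⟨Walk.IsPath.nil, by simp [hyz.ne']⟩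
      obtain ⟨q, hq, huniq⟩ := hT.existsUnique_path z y
      have e1 := huniq _ htake
      have e2 := huniq _ hedge
      have hlen1 : (P.takeUntil y hy).length = 1 := by
        rw [e1, ← e2]; simp
      have hsum : (P.takeUntil y hy).length + (P.dropUntil y hy).length = P.length := by
        have h := congr_arg Walk.length (P.take_spec hy)
        rwa [Walk.length_append] at h
      have hd : G.dist y u ≤ (P.dropUntil y hy).length := SimpleGraph.dist_le _
      have : G.dist y u = k := by rw [SimpleGraph.dist_comm]
      omega
    · -- extend P by the edge y–z: a path from y to u of length k+1
      have hQ : (Walk.cons hyz P : G.Walk y u).IsPath := by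
        rw [Walk.cons_isPath_iff]
        exact ⟨hP, hy⟩
      obtain ⟨R, hR, hRlen⟩ := hconn.exists_path_of_dist y u
      have hRlen' : R.length = k := by rw [hRlen, SimpleGraph.dist_comm]
      obtain ⟨q, hq, huniq⟩ := hT.existsUnique_path y u
      have e1 := huniq _ hQ
      have e2 := huniq _ hR
      have : (Walk.cons hyz P : G.Walk y u).length = R.length := by rw [e1, e2]
      simp [Walk.length_cons, hPlen', hRlen'] at this
  omega

/-- In a tree, two distinct neighbours of `y` cannot both be strictly closer to `u`. -/
lemma aux_not_both (hT : G.IsTree) (u x y z : V) (hxy : G.Adj x y) (hzy : G.Adj z y)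
    (hxz : x ≠ z) :
    ¬(G.dist u x + 1 = G.dist u y ∧ G.dist u z + 1 = G.dist u y) := by
  rintro ⟨hx, hz⟩
  have hconn := hT.isConnected
  set b := G.dist u y with hb
  have claim : ∀ w : V, G.Adj w y → G.dist u w + 1 = b →
      ∃ Q : G.Walk y u, Q.IsPath ∧ Q.getVert 1 = w := by
    intro w hwy hw
    obtain ⟨P, hP, hPlen⟩ := hconn.exists_path_of_dist w u
    have hPlen' : P.length = b - 1 := by
      rw [hPlen, SimpleGraph.dist_comm]; omega
    have hy : y ∉ P.support := by
      intro hy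
      have hd : G.dist y u ≤ (P.dropUntil y hy).length := SimpleGraph.dist_le _
      have hle : (P.dropUntil y hy).length ≤ P.length := Walk.length_dropUntil_le P hy
      have : G.dist y u = b := by rw [SimpleGraph.dist_comm]
      omega
    refine ⟨Walk.cons hwy.symm P, ?_, ?_⟩
    · rw [Walk.cons_isPath_iff]; exact ⟨hP, hy⟩
    · exact (Walk.getVert_cons_succ (n := 0) P hwy.symm).trans P.getVert_zero
  obtain ⟨Q1, hQ1, hQ1v⟩ := claim x hxy hx
  obtain ⟨Q2, hQ2, hQ2v⟩ := claim z hzy hz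
  obtain ⟨q, hq, huniq⟩ := hT.existsUnique_path y u
  have e : Q1 = Q2 := by rw [huniq _ hQ1, huniq _ hQ2]
  apply hxz
  rw [← hQ1v, ← hQ2v, e]

end Aux

theorem stmt18 {V : Type*} [Fintype V] (T : SimpleGraph V) (hT : T.IsTree)
    (a b : V) (ha : T.degree a = 1) (hb : T.degree b = 1)
    (p : T.Walk a b) (hp : p.IsPath) :
    ∀ i, 1 ≤ i → i ≤ p.length - 1 →
      2 * ww T (p.getVert i) < ww T (p.getVert (i - 1)) + ww T (p.getVert (i + 1)) := by
  intro i hi1 hi2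
  have hlen : i + 1 ≤ p.length := by omega
  set x := p.getVert (i - 1) with hxdef
  set y := p.getVert i with hydef
  set z := p.getVert (i + 1) with hzdef
  have hxy : T.Adj x y := by
    have := p.adj_getVert_succ (i := i - 1) (by omega)
    rwa [show i - 1 + 1 = i by omega] at this
  have hyz : T.Adj y z := p.adj_getVert_succ (by omega)
  have hxz : x ≠ z := by
    intro h
    have := aux_getVert_inj hp (i - 1) (i + 1) (by omega) (by omega) h
    omega
  have hne : Nonempty V := ⟨a⟩
  unfold ww
  rw [Finset.mul_sum, ← Finset.sum_add_distrib]
  apply Finset.sum_lt_sum_of_nonempty Finset.univ_nonempty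
  intro u _
  have h1 := aux_dist_adj hT u x y hxy
  have h2 := aux_dist_adj hT u y z hyz
  have h3 := aux_not_both hT u x y z hxy hyz.symm hxz
  set A := T.dist u x
  set B := T.dist u y
  set C := T.dist u z
  rcases h1 with h1 | h1 <;> rcases h2 with h2 | h2
  · -- B = A + 1, C = B + 1 : A = B - 1, C = B + 1
    nlinarith [h1, h2]
  · -- B = A + 1, B = C + 1 : excluded
    exact absurd ⟨by omega, by omega⟩ h3
  · -- A = B + 1, C = B + 1
    nlinarith [h1, h2]
  · -- A = B + 1, B = C + 1
    nlinarith [h1, h2]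
end
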